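/- Suppose the Verblunsky coefficients satisfy |α_n| ≤ C q^n for all n ≥ 0, where C > 0 and q ∈ (0,1). Set C_1 = ∏_{j=0}^∞ (1 + C q^j) (a finite product). Then for every n ≥ 0: if |z| ≤ 1 then |Φ_n*(z)| ≤ C_1, and if |z| ≥ 1 then |Φ_n(z)| ≤ C_1 |z|^n. -/

import Mathlib

open Polynomial Filter Topology

/-- The monic orthogonal polynomials on the unit circle, defined by the Szegő
recursion `Φ₀ = 1`, `Φ_{n+1}(z) = z Φ_n(z) - conj(α_n) Φ_n^*(z)`, where the reversed
polynomial is `P^*(z) = Σ_{j=0}^n conj(c_{n-j}) z^j`. -/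
noncomputable def PhiP (α : ℕ → ℂ) : ℕ → Polynomial ℂ
  | 0 => 1
  | n + 1 => X * PhiP α n -
      Polynomial.C ((starRingEnd ℂ) (α n)) *
        Polynomial.reflect n (Polynomial.map (starRingEnd ℂ) (PhiP α n))

/-- The reversed polynomial `Φ_n^*(z) = z^n conj(Φ_n(1/conj z))`. -/
noncomputable def PhiStarP (α : ℕ → ℂ) (n : ℕ) : Polynomial ℂ :=
  Polynomial.reflect n (Polynomial.map (starRingEnd ℂ) (PhiP α n))

lemma natDegree_reflect_le (f : Polynomial ℂ) (N : ℕ) (h : f.natDegree ≤ N) :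
    (reflect N f).natDegree ≤ N := by
  apply natDegree_le_iff_coeff_eq_zero.mpr
  intro i hi
  rw [coeff_reflect, revAt_eq_self_of_lt hi]
  exact coeff_eq_zero_of_natDegree_lt (lt_of_le_of_lt h hi)

lemma PhiP_natDegree_le (α : ℕ → ℂ) : ∀ n, (PhiP α n).natDegree ≤ n := by
  intro n
  induction n with
  | zero => simp [PhiP]
  | succ n ih =>
      rw [PhiP]
      refine le_trans (natDegree_sub_le _ _) (max_le ?_ ?_)
      · refine le_trans (natDegree_mul_le) ?_
        simp only [natDegree_X]
        omega
      · refine le_trans (natDegree_mul_le) ?_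
        simp only [natDegree_C, zero_add]
        exact le_trans (natDegree_reflect_le _ _ (natDegree_map_le.trans ih)) (Nat.le_succ n)

lemma reflect_reflect_succ (f : Polynomial ℂ) (n : ℕ) (h : f.natDegree ≤ n) :
    reflect (n + 1) (reflect n f) = X * f := by
  ext i
  rw [coeff_reflect, coeff_reflect]
  rcases i with _ | k
  · rw [revAt_le (Nat.zero_le _), Nat.sub_zero, revAt_eq_self_of_lt (Nat.lt_succ_self n)]
    simp [coeff_eq_zero_of_natDegree_lt (lt_of_le_of_lt h (Nat.lt_succ_self n))]
  · rw [coeff_X_mul]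
    by_cases hk : k ≤ n
    · rw [revAt_le (by omega : k + 1 ≤ n + 1), revAt_le (by omega : n + 1 - (k + 1) ≤ n)]
      congr 1
      omega
    · rw [show revAt (n + 1) (k + 1) = k + 1 from revAt_eq_self_of_lt (by omega),
        revAt_eq_self_of_lt (by omega)]
      rw [coeff_eq_zero_of_natDegree_lt (by omega), coeff_eq_zero_of_natDegree_lt (by omega)]

lemma map_conj_conj (f : Polynomial ℂ) :
    Polynomial.map (starRingEnd ℂ) (Polynomial.map (starRingEnd ℂ) f) = f := by
  rw [Polynomial.map_map]
  have : (starRingEnd ℂ).comp (starRingEnd ℂ) = RingHom.id ℂ :=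
    RingHom.ext fun x => Complex.conj_conj x
  rw [this, Polynomial.map_id]

lemma PhiStarP_succ (α : ℕ → ℂ) (n : ℕ) :
    PhiStarP α (n + 1) = PhiStarP α n - Polynomial.C (α n) * (X * PhiP α n) := by
  have hdeg := PhiP_natDegree_le α n
  rw [PhiStarP, PhiP]
  rw [Polynomial.map_sub, Polynomial.map_mul, Polynomial.map_mul, map_C]
  rw [Complex.conj_conj, Polynomial.map_X]
  rw [← reflect_map, map_conj_conj, reflect_sub, reflect_C_mul]
  rw [reflect_reflect_succ _ _ hdeg]
  have h1 : reflect (n + 1) (X * Polynomial.map (starRingEnd ℂ) (PhiP α n)) =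
      reflect n (Polynomial.map (starRingEnd ℂ) (PhiP α n)) := by
    have := reflect_mul (X : Polynomial ℂ) (Polynomial.map (starRingEnd ℂ) (PhiP α n))
      (natDegree_X_le) (natDegree_map_le.trans hdeg)
    rw [show (1 + n) = n + 1 from Nat.add_comm 1 n] at this
    rw [this, reflect_one_X, one_mul]
  rw [h1, PhiStarP]

lemma PhiP_eval_succ (α : ℕ → ℂ) (n : ℕ) (z : ℂ) :
    (PhiP α (n + 1)).eval z =
      z * (PhiP α n).eval z - (starRingEnd ℂ) (α n) * (PhiStarP α n).eval z := by
  rw [PhiP]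
  simp [PhiStarP]

lemma PhiStarP_eval_succ (α : ℕ → ℂ) (n : ℕ) (z : ℂ) :
    (PhiStarP α (n + 1)).eval z =
      (PhiStarP α n).eval z - α n * (z * (PhiP α n).eval z) := by
  rw [PhiStarP_succ]
  simp


lemma one_le_prod_real {ι : Type*} (s : Finset ι) (f : ι → ℝ) (h : ∀ i ∈ s, 1 ≤ f i) :
    1 ≤ ∏ i ∈ s, f i := by
  classical
  induction s using Finset.induction_on with
  | empty => simp
  | @insert a s hx ih =>
      rw [Finset.prod_insert hx]
      have h1 : 1 ≤ f a := h a (Finset.mem_insert_self a s)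
      have h2 : 1 ≤ ∏ i ∈ s, f i := ih fun i hi => h i (Finset.mem_insert_of_mem hi)
      nlinarith

lemma prod_subset_le_real {ι : Type*} {s t : Finset ι} (f : ι → ℝ) (h : s ⊆ t)
    (hf : ∀ i, 1 ≤ f i) : ∏ i ∈ s, f i ≤ ∏ i ∈ t, f i := by
  classical
  rw [← Finset.prod_sdiff h]
  have h1 : 1 ≤ ∏ i ∈ t \ s, f i := one_le_prod_real _ _ fun i _ => hf i
  have h2 : 1 ≤ ∏ i ∈ s, f i := one_le_prod_real _ _ fun i _ => hf i
  nlinarith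


lemma key_lemma (α : ℕ → ℂ) (C q : ℝ) (hC : 0 < C) (hq0 : 0 < q)
    (hdecay : ∀ n : ℕ, ‖α n‖ ≤ C * q ^ n) :
    ∀ n : ℕ, ∀ z : ℂ,
      (‖z‖ ≤ 1 →
        ‖(PhiStarP α n).eval z‖ ≤ ∏ j ∈ Finset.range n, (1 + C * q ^ j) ∧
        ‖(PhiP α n).eval z‖ ≤ ∏ j ∈ Finset.range n, (1 + C * q ^ j)) ∧
      (1 ≤ ‖z‖ →
        ‖(PhiP α n).eval z‖ ≤
          (∏ j ∈ Finset.range n, (1 + C * q ^ j)) * ‖z‖ ^ n ∧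
        ‖(PhiStarP α n).eval z‖ ≤
          (∏ j ∈ Finset.range n, (1 + C * q ^ j)) * ‖z‖ ^ n) := by
  have hfac : ∀ j : ℕ, (1 : ℝ) ≤ 1 + C * q ^ j := fun j => by
    have : 0 < C * q ^ j := mul_pos hC (pow_pos hq0 j)
    linarith
  have hP1 : ∀ n : ℕ, (1 : ℝ) ≤ ∏ j ∈ Finset.range n, (1 + C * q ^ j) := fun n =>
    one_le_prod_real _ _ fun j _ => hfac j
  intro n
  induction n with
  | zero =>
      intro z
      have h1 : PhiP α 0 = 1 := rfl
      have h2 : PhiStarP α 0 = 1 := by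
        rw [PhiStarP, h1]
        simp [reflect_one]
      simp [h1, h2]
  | succ n ih =>
      intro z
      obtain ⟨ih1, ih2⟩ := ih z
      set Pn : ℝ := ∏ j ∈ Finset.range n, (1 + C * q ^ j) with hPn'
      have hPsucc : ∏ j ∈ Finset.range (n + 1), (1 + C * q ^ j) = Pn * (1 + C * q ^ n) :=
        Finset.prod_range_succ _ _
      rw [hPsucc]
      have hzpos : (0 : ℝ) ≤ ‖z‖ := norm_nonneg z
      have han : ‖α n‖ ≤ C * q ^ n := hdecay n
      have hanpos : (0 : ℝ) ≤ ‖α n‖ := norm_nonneg _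
      have hCq : (0 : ℝ) < C * q ^ n := mul_pos hC (pow_pos hq0 n)
      have hPn : (1 : ℝ) ≤ Pn := hP1 n
      have eS : ‖(PhiStarP α (n + 1)).eval z‖ ≤
          ‖(PhiStarP α n).eval z‖ +
            ‖α n‖ * (‖z‖ * ‖(PhiP α n).eval z‖) := by
        rw [PhiStarP_eval_succ]
        refine le_trans (norm_sub_le _ _) ?_
        simp [map_mul]
      have eP : ‖(PhiP α (n + 1)).eval z‖ ≤
          ‖z‖ * ‖(PhiP α n).eval z‖ +
            ‖α n‖ * ‖(PhiStarP α n).eval z‖ := by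
        rw [PhiP_eval_succ]
        refine le_trans (norm_sub_le _ _) ?_
        simp [map_mul]
      constructor
      · intro hz
        obtain ⟨hS, hPh⟩ := ih1 hz
        have hb1 : ‖α n‖ * (‖z‖ * ‖(PhiP α n).eval z‖) ≤
            C * q ^ n * Pn := by
          have h1 : ‖z‖ * ‖(PhiP α n).eval z‖ ≤ Pn := by
            nlinarith [norm_nonneg ((PhiP α n).eval z)]
          nlinarith
        have hb2 : ‖α n‖ * ‖(PhiStarP α n).eval z‖ ≤
            C * q ^ n * Pn := by
          nlinarith [norm_nonneg ((PhiStarP α n).eval z)]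
        constructor
        · nlinarith
        · nlinarith [mul_le_mul_of_nonneg_left hPh hzpos]
      · intro hz
        obtain ⟨hPh, hS⟩ := ih2 hz
        have hzn : (0 : ℝ) ≤ ‖z‖ ^ n := pow_nonneg hzpos n
        have hPr : (0 : ℝ) ≤ Pn * ‖z‖ ^ n := mul_nonneg (by linarith) hzn
        have hgrow : Pn * ‖z‖ ^ n ≤ Pn * ‖z‖ ^ n * ‖z‖ :=
          le_mul_of_one_le_right hPr hz
        have hA : ‖z‖ * ‖(PhiP α n).eval z‖ ≤
            ‖z‖ * (Pn * ‖z‖ ^ n) :=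
          mul_le_mul_of_nonneg_left hPh hzpos
        have haS : ‖α n‖ * ‖(PhiStarP α n).eval z‖ ≤
            C * q ^ n * (Pn * ‖z‖ ^ n) :=
          mul_le_mul han hS (norm_nonneg _) hCq.le
        have haA : ‖α n‖ * (‖z‖ * ‖(PhiP α n).eval z‖) ≤
            C * q ^ n * (‖z‖ * (Pn * ‖z‖ ^ n)) :=
          mul_le_mul han hA (mul_nonneg hzpos (norm_nonneg _)) hCq.le
        have hgrowB := mul_le_mul_of_nonneg_left hgrow hCq.le
        constructor
        · rw [pow_succ]
          nlinarith
        · rw [pow_succ]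
          nlinarith

theorem stmt_0 (α : ℕ → ℂ) (hα : ∀ n, ‖α n‖ < 1)
    (C q : ℝ) (hC : 0 < C) (hq0 : 0 < q) (hq1 : q < 1)
    (hdecay : ∀ n : ℕ, ‖α n‖ ≤ C * q ^ n)
    (C₁ : ℝ) (hC₁ : HasProd (fun j : ℕ => 1 + C * q ^ j) C₁) :
    ∀ n : ℕ, ∀ z : ℂ,
      (‖z‖ ≤ 1 → ‖(PhiStarP α n).eval z‖ ≤ C₁) ∧
      (1 ≤ ‖z‖ → ‖(PhiP α n).eval z‖ ≤ C₁ * ‖z‖ ^ n) := by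
  have hfac : ∀ j : ℕ, (1 : ℝ) ≤ 1 + C * q ^ j := fun j => by
    have : 0 < C * q ^ j := mul_pos hC (pow_pos hq0 j)
    linarith
  have hPle : ∀ n : ℕ, ∏ j ∈ Finset.range n, (1 + C * q ^ j) ≤ C₁ := by
    intro n
    refine ge_of_tendsto hC₁ ?_
    refine Filter.eventually_atTop.2 ⟨Finset.range n, fun t ht => ?_⟩
    exact prod_subset_le_real _ ht hfac
  intro n z
  obtain ⟨k1, k2⟩ := key_lemma α C q hC hq0 hdecay n z
  constructor
  · intro hz
    exact le_trans (k1 hz).1 (hPle n)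
  · intro hz
    have hzn : (0 : ℝ) ≤ ‖z‖ ^ n := pow_nonneg (norm_nonneg z) n
    exact le_trans (k2 hz).1 (mul_le_mul_of_nonneg_right (hPle n) hzn)
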